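/- Let L ≥ 1 be an integer, Δ > 0, τ = 2π/Δ, and let c_1, …, c_L be real numbers. Then 2 · Σ_{k=1}^L Σ_{l=1}^L c_k c_l Δ² ∫₀^τ ( ∫₀^{t₁} sin(Δ(k t₁ − l t₂)) dt₂ ) dt₁ = 4π Σ_{l=1}^L c_l² / l. -/

import Mathlib

open Real

lemma sin_lin_integral (b d a : ℝ) (hb : b ≠ 0) :
    ∫ x in (0:ℝ)..a, Real.sin (b * x + d) = (Real.cos d - Real.cos (b * a + d)) / b := by
  rw [intervalIntegral.integral_comp_mul_add Real.sin hb d, integral_sin]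
  simp [smul_eq_mul]
  ring

lemma cos_mul_integral (b a : ℝ) (hb : b ≠ 0) :
    ∫ x in (0:ℝ)..a, Real.cos (b * x) = Real.sin (b * a) / b := by
  rw [intervalIntegral.integral_comp_mul_left Real.cos hb, integral_cos]
  simp [smul_eq_mul]
  ring

lemma cos_int_integral (Δ : ℝ) (hΔ : 0 < Δ) (m : ℤ) :
    ∫ t in (0:ℝ)..(2 * π / Δ), Real.cos (Δ * (m : ℝ) * t) =
      if m = 0 then 2 * π / Δ else 0 := by
  rcases eq_or_ne m 0 with h | h
  · simp [h]
  · have hb : Δ * (m : ℝ) ≠ 0 := mul_ne_zero hΔ.ne' (Int.cast_ne_zero.2 h)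
    rw [if_neg h, cos_mul_integral _ _ hb]
    have : Δ * (m : ℝ) * (2 * π / Δ) = (2 * m : ℤ) * π := by
      push_cast; field_simp
    rw [this, Real.sin_int_mul_pi]
    simp

/-- **Rotation-angle simplification (Appendix C of the paper).** For the
polychromatic driving field `Υ(t) = Σ_{l=1}^L c_l Δ e^{ilΔt}` in the single-mode
model, choosing the gate duration `τ = 2π/Δ` makes the two-qubit rotation angle
`Θ(τ) = 2 Σ_{k,l=1}^L c_k c_l Δ² ∫₀^τ ∫₀^{t₁} sin(Δ(k t₁ − l t₂)) dt₂ dt₁`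
equal to `4π Σ_{l=1}^L c_l²/l`. -/
theorem rotation_angle_simplification
    (L : ℕ) (hL : 1 ≤ L) (Δ : ℝ) (hΔ : 0 < Δ) (τ : ℝ) (hτ : τ = 2 * π / Δ)
    (c : ℕ → ℝ) :
    2 * ∑ k ∈ Finset.Icc 1 L, ∑ l ∈ Finset.Icc 1 L,
        c k * c l * Δ ^ 2 *
          ∫ t₁ in (0:ℝ)..τ, ∫ t₂ in (0:ℝ)..t₁,
            Real.sin (Δ * ((k : ℝ) * t₁ - (l : ℝ) * t₂)) =
      4 * π * ∑ l ∈ Finset.Icc 1 L, c l ^ 2 / (l : ℝ) := by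
  have key : ∀ k l : ℕ, 1 ≤ k → 1 ≤ l →
      (∫ t₁ in (0:ℝ)..τ, ∫ t₂ in (0:ℝ)..t₁,
          Real.sin (Δ * ((k : ℝ) * t₁ - (l : ℝ) * t₂))) =
        if k = l then τ / (Δ * l) else 0 := by
    intro k l hk hl
    have hl0 : (l : ℝ) ≠ 0 := Nat.cast_ne_zero.2 (by omega)
    have hk0 : (k : ℝ) ≠ 0 := Nat.cast_ne_zero.2 (by omega)
    have hb : -(Δ * (l : ℝ)) ≠ 0 := by
      simp [hΔ.ne', hl0]
    have inner : ∀ t₁ : ℝ,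
        (∫ t₂ in (0:ℝ)..t₁, Real.sin (Δ * ((k : ℝ) * t₁ - (l : ℝ) * t₂))) =
        (Real.cos (Δ * ((k : ℝ) - l) * t₁) - Real.cos (Δ * (k : ℝ) * t₁)) / (Δ * l) := by
      intro t₁
      have h1 : (∫ t₂ in (0:ℝ)..t₁, Real.sin (Δ * ((k : ℝ) * t₁ - (l : ℝ) * t₂))) =
          ∫ t₂ in (0:ℝ)..t₁, Real.sin ((-(Δ * l)) * t₂ + Δ * k * t₁) := by
        apply intervalIntegral.integral_congr
        intro x _
        ring_nf
      rw [h1, sin_lin_integral _ _ _ hb]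
      have h2 : -(Δ * (l : ℝ)) * t₁ + Δ * k * t₁ = Δ * ((k : ℝ) - l) * t₁ := by ring
      rw [h2]
      field_simp
      ring
    rw [intervalIntegral.integral_congr (g := fun t₁ =>
        (Real.cos (Δ * ((k : ℝ) - l) * t₁) - Real.cos (Δ * (k : ℝ) * t₁)) / (Δ * l))
        (fun x _ => inner x)]
    have hc1 : IntervalIntegrable (fun t₁ => Real.cos (Δ * ((k : ℝ) - l) * t₁))
        MeasureTheory.volume 0 τ := (Real.continuous_cos.comp (by continuity)).intervalIntegrable _ _
    have hc2 : IntervalIntegrable (fun t₁ => Real.cos (Δ * (k : ℝ) * t₁))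
        MeasureTheory.volume 0 τ := (Real.continuous_cos.comp (by continuity)).intervalIntegrable _ _
    rw [intervalIntegral.integral_div, intervalIntegral.integral_sub hc1 hc2]
    have e1 : ((k : ℝ) - l) = ((k - l : ℤ) : ℝ) := by push_cast; ring
    have e2 : (k : ℝ) = ((k : ℤ) : ℝ) := by push_cast; ring
    rw [hτ, e1, e2, cos_int_integral Δ hΔ, cos_int_integral Δ hΔ]
    have hkz : (k : ℤ) ≠ 0 := by omega
    rcases eq_or_ne k l with h | h
    · simp [h, hkz, show (l:ℤ) ≠ 0 by omega, show l ≠ 0 by omega]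
    · have : (k : ℤ) - l ≠ 0 := by omega
      simp [h, this, hkz, show k ≠ 0 by omega]
  have step : ∀ k ∈ Finset.Icc 1 L,
      (∑ l ∈ Finset.Icc 1 L, c k * c l * Δ ^ 2 *
          ∫ t₁ in (0:ℝ)..τ, ∫ t₂ in (0:ℝ)..t₁,
            Real.sin (Δ * ((k : ℝ) * t₁ - (l : ℝ) * t₂))) =
        c k ^ 2 * Δ ^ 2 * τ / (Δ * k) := by
    intro k hk
    rw [Finset.mem_Icc] at hk
    have : ∀ l ∈ Finset.Icc 1 L,
        c k * c l * Δ ^ 2 * (∫ t₁ in (0:ℝ)..τ, ∫ t₂ in (0:ℝ)..t₁,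
            Real.sin (Δ * ((k : ℝ) * t₁ - (l : ℝ) * t₂))) =
        if k = l then c k * c l * Δ ^ 2 * (τ / (Δ * l)) else 0 := by
      intro l hl
      rw [Finset.mem_Icc] at hl
      rw [key k l hk.1 hl.1]
      split <;> simp
    rw [Finset.sum_congr rfl this, Finset.sum_ite_eq]
    rw [if_pos (Finset.mem_Icc.2 hk)]
    ring
  rw [Finset.sum_congr rfl step, Finset.mul_sum, Finset.mul_sum]
  apply Finset.sum_congr rfl
  intro k hk
  rw [Finset.mem_Icc] at hk
  have hk0 : (k : ℝ) ≠ 0 := Nat.cast_ne_zero.2 (by omega)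
  rw [hτ]
  field_simp
  ring
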